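/- Let $g$ be holomorphic on the annulus $A = \{1 < |\zeta| < r_0\}$ and continuous on $\overline{A}$. Suppose there exist real numbers $f \in (0,1)$ and $\kappa$, and complex numbers $a, b$, such that $g(\zeta) = f\,\overline{a\zeta + b\zeta^{-1}}$ on $|\zeta| = r_0$ and $g(\zeta) = \overline{a\zeta + b\zeta^{-1}} + \kappa(a\zeta + b\zeta^{-1})$ on $|\zeta| = 1$. Then the Laurent coefficients $c_n$ of $g$ satisfy: $c_1 = f\bar{b}r_0^{-2} = \bar{b} + \kappa a$, $c_{-1} = f\bar{a}r_0^{2} = \bar{a} + \kappa b$, and $c_n = 0$ for $|n| \neq 1$. -/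

import Mathlib

open Complex intervalIntegral in
lemma stmt15_ortho (k : ℤ) :
    (∫ θ in (0:ℝ)..(2*Real.pi), Complex.exp (k * θ * I)) =
      if k = 0 then (2*Real.pi : ℂ) else 0 := by
  split_ifs with hk
  · subst hk; simp
  · have hc : (k : ℂ) * I ≠ 0 :=
      mul_ne_zero (by exact_mod_cast hk) I_ne_zero
    have h : ∀ θ : ℝ, (k:ℂ) * θ * I = ((k:ℂ)*I) * θ := by intro θ; ring
    simp_rw [h]
    rw [integral_exp_mul_complex hc]
    have h1 : Complex.exp ((k:ℂ)*I*(2*(Real.pi:ℂ))) = 1 := by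
      rw [show (k:ℂ)*I*(2*(Real.pi:ℂ)) = k*(2*Real.pi*I) by ring]
      exact Complex.exp_int_mul_two_pi_mul_I k
    simp [h1]

open Complex intervalIntegral in
lemma stmt15_term (ρ : ℝ) (hρ : 0 < ρ) (m n : ℤ) :
    (∫ θ in (0:ℝ)..(2*Real.pi),
        ((ρ:ℂ) * Complex.exp (θ * I))^m * Complex.exp ((-n : ℤ) * θ * I))
      = if m = n then (2*Real.pi : ℂ) * (ρ:ℂ)^m else 0 := by
  have key : ∀ θ : ℝ, ((ρ:ℂ) * Complex.exp (θ * I))^m * Complex.exp ((-n : ℤ) * θ * I)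
      = (ρ:ℂ)^m * Complex.exp (((m - n : ℤ) : ℂ) * θ * I) := by
    intro θ
    rw [mul_zpow, ← Complex.exp_int_mul, mul_assoc, ← Complex.exp_add]
    congr 2
    push_cast
    ring
  simp_rw [key]
  rw [intervalIntegral.integral_const_mul, stmt15_ortho]
  have : m - n = 0 ↔ m = n := sub_eq_zero
  split_ifs with h1 h2 h2
  · ring
  · exact absurd (this.mp h1) h2
  · exact absurd (this.mpr h2) h1
  · ring

open Complex intervalIntegral MeasureTheory in
lemma stmt15_inside (r0 : ℝ) (g : ℂ → ℂ) (c : ℤ → ℂ)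
    (hc : ∀ ζ : ℂ, 1 < ‖ζ‖ → ‖ζ‖ < r0 →
      HasSum (fun n : ℤ => c n * ζ ^ n) (g ζ))
    (ρ : ℝ) (h1 : 1 < ρ) (h2 : ρ < r0) (n : ℤ) :
    (∫ θ in (0:ℝ)..(2*Real.pi),
        g ((ρ:ℂ) * Complex.exp (θ * I)) * Complex.exp ((-n : ℤ) * θ * I))
      = c n * ((2*Real.pi : ℂ) * (ρ:ℂ)^n) := by
  have hρ0 : 0 < ρ := lt_trans one_pos h1
  have habs : ∀ θ : ℝ, ‖(ρ:ℂ) * Complex.exp (θ * I)‖ = ρ := by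
    intro θ
    simp [norm_mul, Complex.norm_real, Complex.norm_exp_ofReal_mul_I, abs_of_pos hρ0]
  have hζne : ∀ θ : ℝ, ((ρ:ℂ) * Complex.exp (θ * I)) ≠ 0 := by
    intro θ h
    have := habs θ
    rw [h] at this
    simp at this
    exact hρ0.ne' this.symm
  -- norm of each term
  have hnorm : ∀ (m : ℤ) (θ : ℝ),
      ‖c m * ((ρ:ℂ) * Complex.exp (θ * I))^m * Complex.exp ((-n : ℤ) * θ * I)‖
        = ‖c m‖ * ρ^m := by
    intro m θ
    have h3 : ((-n : ℤ) : ℂ) * θ * I = ((-n * θ : ℝ) : ℂ) * I := by push_cast; ring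
    rw [norm_mul, norm_mul, norm_zpow]
    simp only [habs θ, h3, Complex.norm_exp_ofReal_mul_I, mul_one]
  -- continuity of each term
  have hcontm : ∀ m : ℤ, Continuous (fun θ : ℝ =>
      c m * ((ρ:ℂ) * Complex.exp (θ * I))^m * Complex.exp ((-n : ℤ) * θ * I)) := by
    intro m
    have hbase : Continuous fun θ : ℝ => (ρ:ℂ) * Complex.exp (θ * I) :=
      continuous_const.mul (Complex.continuous_exp.comp
        ((Complex.continuous_ofReal).mul continuous_const))
    exact ((continuous_const.mul (hbase.zpow₀ m (fun θ => Or.inl (hζne θ)))).mul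
      (Complex.continuous_exp.comp ((continuous_const.mul Complex.continuous_ofReal).mul
        continuous_const)))
  -- summability
  have hsum0 : Summable (fun m : ℤ => ‖c m‖ * ρ^m) := by
    have h5 : ‖(ρ:ℂ)‖ = ρ := by rw [Complex.norm_real, Real.norm_eq_abs, abs_of_pos hρ0]
    have := (hc (ρ:ℂ) (by rw [h5]; exact h1) (by rw [h5]; exact h2)).summable
    have hn := summable_norm_iff.mpr this
    convert hn using 2 with m
    rw [norm_mul, norm_zpow, h5]
  -- pointwise sum
  have hpt : ∀ θ : ℝ, g ((ρ:ℂ) * Complex.exp (θ * I)) * Complex.exp ((-n : ℤ) * θ * I)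
      = ∑' m : ℤ, c m * ((ρ:ℂ) * Complex.exp (θ * I))^m * Complex.exp ((-n : ℤ) * θ * I) := by
    intro θ
    have := ((hc _ (by rw [habs θ]; exact h1) (by rw [habs θ]; exact h2)).mul_right
      (Complex.exp ((-n : ℤ) * θ * I))).tsum_eq
    exact this.symm
  have h2π : (0:ℝ) ≤ 2*Real.pi := by positivity
  rw [intervalIntegral.integral_of_le h2π]
  simp_rw [hpt]
  rw [← MeasureTheory.integral_tsum_of_summable_integral_norm]
  · -- ∑' m, ∫ term = c n * (2π ρ^n)
    have hterm : ∀ m : ℤ,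
        (∫ θ in Set.Ioc (0:ℝ) (2*Real.pi),
          c m * ((ρ:ℂ) * Complex.exp (θ * I))^m * Complex.exp ((-n : ℤ) * θ * I))
        = if m = n then c n * ((2*Real.pi : ℂ) * (ρ:ℂ)^n) else 0 := by
      intro m
      rw [← intervalIntegral.integral_of_le h2π]
      simp_rw [mul_assoc (c m)]
      rw [intervalIntegral.integral_const_mul, stmt15_term ρ hρ0 m n]
      split_ifs with h
      · subst h; ring
      · ring
    simp_rw [hterm]
    exact tsum_ite_eq n _
  · intro m
    exact (hcontm m).integrableOn_Ioc
  · have heval : ∀ m : ℤ, (∫ θ in Set.Ioc (0:ℝ) (2*Real.pi),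
        ‖c m * ((ρ:ℂ) * Complex.exp (θ * I))^m * Complex.exp ((-n : ℤ) * θ * I)‖)
        = (2*Real.pi) * (‖c m‖ * ρ^m) := by
      intro m
      simp_rw [hnorm m]
      rw [MeasureTheory.setIntegral_const, Real.volume_real_Ioc_of_le h2π, smul_eq_mul]
      rw [sub_zero]
    simp_rw [heval]
    exact hsum0.mul_left _

open Complex in
lemma stmt15_abs (ρ : ℝ) (hρ : 0 < ρ) (θ : ℝ) :
    ‖(ρ:ℂ) * Complex.exp (θ * I)‖ = ρ := by
  simp [norm_mul, Complex.norm_real, Complex.norm_exp_ofReal_mul_I, abs_of_pos hρ]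

open Complex intervalIntegral in
lemma stmt15_bdry (u v : ℂ) (n : ℤ) :
    (∫ θ in (0:ℝ)..(2*Real.pi),
      (u * Complex.exp (((-1 - n : ℤ) : ℂ) * θ * I) +
       v * Complex.exp (((1 - n : ℤ) : ℂ) * θ * I)))
    = (if n = -1 then u * (2*Real.pi : ℂ) else 0) +
      (if n = 1 then v * (2*Real.pi : ℂ) else 0) := by
  have hint : ∀ (w : ℂ) (k : ℤ), IntervalIntegrable
      (fun θ : ℝ => w * Complex.exp ((k : ℂ) * θ * I)) MeasureTheory.volume 0 (2*Real.pi) := by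
    intro w k
    apply Continuous.intervalIntegrable
    exact continuous_const.mul (Complex.continuous_exp.comp
      ((continuous_const.mul Complex.continuous_ofReal).mul continuous_const))
  rw [intervalIntegral.integral_add (hint u _) (hint v _),
    intervalIntegral.integral_const_mul, intervalIntegral.integral_const_mul,
    stmt15_ortho, stmt15_ortho]
  have h1 : (-1 - n = 0) ↔ n = -1 := by omega
  have h2 : (1 - n = 0) ↔ n = 1 := by omega
  by_cases hn1 : n = -1 <;> by_cases hn2 : n = 1 <;>
    simp [h1, h2, hn1, hn2] <;> omega

open Complex MeasureTheory Filter Set in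
lemma stmt15_limit (r0 : ℝ) (hr0 : 1 < r0) (g : ℂ → ℂ)
    (hcont : ContinuousOn g (closure {ζ : ℂ | 1 < ‖ζ‖ ∧ ‖ζ‖ < r0}))
    (ρ0 : ℝ) (hρ0 : ρ0 ∈ Set.Icc 1 r0) (n : ℤ) :
    Tendsto (fun ρ : ℝ => ∫ θ in (0:ℝ)..(2*Real.pi),
        g ((ρ:ℂ) * Complex.exp (θ * I)) * Complex.exp ((-n : ℤ) * θ * I))
      (nhdsWithin ρ0 (Set.Ioo 1 r0))
      (nhds (∫ θ in (0:ℝ)..(2*Real.pi),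
        g ((ρ0:ℂ) * Complex.exp (θ * I)) * Complex.exp ((-n : ℤ) * θ * I))) := by
  set S := {ζ : ℂ | 1 < ‖ζ‖ ∧ ‖ζ‖ < r0} with hS
  have hmemS : ∀ ρ ∈ Ioo (1:ℝ) r0, ∀ θ : ℝ, ((ρ:ℂ) * Complex.exp (θ * I)) ∈ S := by
    intro ρ hρ θ
    have h0 : (0:ℝ) < ρ := lt_trans one_pos hρ.1
    exact ⟨by rw [stmt15_abs ρ h0 θ]; exact hρ.1, by rw [stmt15_abs ρ h0 θ]; exact hρ.2⟩
  have hbase : ∀ θ : ℝ, Continuous fun t : ℝ => (t:ℂ) * Complex.exp (θ * I) := fun θ =>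
    Complex.continuous_ofReal.mul continuous_const
  have hcl : ∀ θ : ℝ, ((ρ0:ℂ) * Complex.exp (θ * I)) ∈ closure S := by
    intro θ
    have hmt : Set.MapsTo (fun t : ℝ => (t:ℂ) * Complex.exp (θ * I)) (Ioo 1 r0) S :=
      fun t ht => hmemS t ht θ
    have := hmt.closure (hbase θ)
    apply this
    rw [closure_Ioo (ne_of_lt hr0)]
    exact hρ0
  obtain ⟨C, hC⟩ : ∃ C, ∀ x ∈ closure S, ‖g x‖ ≤ C := by
    have hb : Bornology.IsBounded S := by
      apply (Metric.isBounded_closedBall (x := (0:ℂ)) (r := r0)).subset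
      intro ζ hζ
      rw [Metric.mem_closedBall, dist_zero_right]
      exact le_of_lt hζ.2
    have hcpt : IsCompact (closure S) :=
      Metric.isCompact_of_isClosed_isBounded isClosed_closure hb.closure
    exact hcpt.exists_bound_of_continuousOn hcont
  have hne : (nhdsWithin ρ0 (Ioo (1:ℝ) r0)).NeBot := by
    apply mem_closure_iff_nhdsWithin_neBot.mp
    rw [closure_Ioo (ne_of_lt hr0)]
    exact hρ0
  have hexp1 : ∀ (ρ : ℝ) (θ : ℝ),
      ‖g ((ρ:ℂ) * Complex.exp (θ * I)) * Complex.exp ((-n : ℤ) * θ * I)‖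
        = ‖g ((ρ:ℂ) * Complex.exp (θ * I))‖ := by
    intro ρ θ
    have h4 : ‖Complex.exp (((-n : ℤ):ℂ) * θ * I)‖ = 1 := by
      rw [show ((-n : ℤ):ℂ) * θ * I = ((((-n : ℤ) * θ : ℝ)):ℂ) * I by push_cast; ring]
      exact Complex.norm_exp_ofReal_mul_I _
    rw [norm_mul, h4, mul_one]
  apply intervalIntegral.tendsto_integral_filter_of_dominated_convergence (fun _ => C)
  · filter_upwards [self_mem_nhdsWithin] with ρ hρ
    have hco : Continuous fun θ : ℝ => g ((ρ:ℂ) * Complex.exp (θ * I)) := by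
      apply hcont.comp_continuous
      · exact continuous_const.mul (Complex.continuous_exp.comp
          (Complex.continuous_ofReal.mul continuous_const))
      · exact fun θ => subset_closure (hmemS ρ hρ θ)
    exact (hco.mul (Complex.continuous_exp.comp
      ((continuous_const.mul Complex.continuous_ofReal).mul continuous_const))).aestronglyMeasurable.restrict
  · filter_upwards [self_mem_nhdsWithin] with ρ hρ
    apply Eventually.of_forall
    intro θ _
    rw [hexp1]
    exact hC _ (subset_closure (hmemS ρ hρ θ))
  · exact intervalIntegrable_const
  · apply Eventually.of_forall
    intro θ _
    apply Tendsto.mul_const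
    have h1 : Tendsto (fun ρ : ℝ => (ρ:ℂ) * Complex.exp (θ * I))
        (nhdsWithin ρ0 (Ioo 1 r0)) (nhdsWithin ((ρ0:ℂ) * Complex.exp (θ * I)) (closure S)) := by
      rw [tendsto_nhdsWithin_iff]
      constructor
      · exact ((hbase θ).tendsto ρ0).mono_left nhdsWithin_le_nhds
      · filter_upwards [self_mem_nhdsWithin] with ρ hρ
        exact subset_closure (hmemS ρ hρ θ)
    exact (hcont _ (hcl θ)).tendsto.comp h1

open ComplexConjugate

section Main
open Complex MeasureTheory Filter Set intervalIntegral

theorem stmt15 (r0 : ℝ) (hr0 : 1 < r0) (g : ℂ → ℂ)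
    (hhol : DifferentiableOn ℂ g {ζ : ℂ | 1 < ‖ζ‖ ∧ ‖ζ‖ < r0})
    (hcont : ContinuousOn g (closure {ζ : ℂ | 1 < ‖ζ‖ ∧ ‖ζ‖ < r0}))
    (f κ : ℝ) (hf0 : 0 < f) (hf1 : f < 1) (a b : ℂ)
    (hbdry0 : ∀ ζ : ℂ, ‖ζ‖ = r0 → g ζ = (f : ℂ) * conj (a * ζ + b * ζ⁻¹))
    (hbdry1 : ∀ ζ : ℂ, ‖ζ‖ = 1 →
      g ζ = conj (a * ζ + b * ζ⁻¹) + (κ : ℂ) * (a * ζ + b * ζ⁻¹))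
    (c : ℤ → ℂ)
    (hc : ∀ ζ : ℂ, 1 < ‖ζ‖ → ‖ζ‖ < r0 →
      HasSum (fun n : ℤ => c n * ζ ^ n) (g ζ)) :
    c 1 = (f : ℂ) * conj b * ((r0 : ℂ) ^ (-2 : ℤ)) ∧
    c 1 = conj b + (κ : ℂ) * a ∧
    c (-1) = (f : ℂ) * conj a * ((r0 : ℂ) ^ (2 : ℤ)) ∧
    c (-1) = conj a + (κ : ℂ) * b ∧
    ∀ n : ℤ, n ≠ 1 → n ≠ -1 → c n = 0 := by
  have hr0pos : (0:ℝ) < r0 := lt_trans one_pos hr0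
  have hr0ne : (r0:ℂ) ≠ 0 := Complex.ofReal_ne_zero.mpr hr0pos.ne'
  have h2πne : (2*Real.pi : ℂ) ≠ 0 :=
    mul_ne_zero two_ne_zero (Complex.ofReal_ne_zero.mpr Real.pi_ne_zero)
  -- identification of boundary integrals with coefficients
  have key : ∀ ρ0 : ℝ, ρ0 ∈ Set.Icc 1 r0 → ∀ n : ℤ,
      (∫ θ in (0:ℝ)..(2*Real.pi),
        g ((ρ0:ℂ) * Complex.exp (θ * I)) * Complex.exp ((-n : ℤ) * θ * I))
      = c n * ((2*Real.pi : ℂ) * (ρ0:ℂ)^n) := by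
    intro ρ0 hρ0 n
    have hne : (nhdsWithin ρ0 (Ioo (1:ℝ) r0)).NeBot := by
      apply mem_closure_iff_nhdsWithin_neBot.mp
      rw [closure_Ioo (ne_of_lt hr0)]
      exact hρ0
    have h1 := stmt15_limit r0 hr0 g hcont ρ0 hρ0 n
    have heq : ∀ᶠ ρ : ℝ in nhdsWithin ρ0 (Ioo (1:ℝ) r0),
        (∫ θ in (0:ℝ)..(2*Real.pi),
          g ((ρ:ℂ) * Complex.exp (θ * I)) * Complex.exp ((-n : ℤ) * θ * I))
        = c n * ((2*Real.pi : ℂ) * (ρ:ℂ)^n) := by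
      filter_upwards [self_mem_nhdsWithin] with ρ hρ
      exact stmt15_inside r0 g c hc ρ hρ.1 hρ.2 n
    have hρ0ne : (ρ0:ℂ) ≠ 0 := by
      apply Complex.ofReal_ne_zero.mpr
      exact (lt_of_lt_of_le one_pos hρ0.1).ne'
    have h3 : Tendsto (fun ρ : ℝ => c n * ((2*Real.pi : ℂ) * (ρ:ℂ)^n))
        (nhdsWithin ρ0 (Ioo (1:ℝ) r0)) (nhds (c n * ((2*Real.pi : ℂ) * (ρ0:ℂ)^n))) := by
      apply Tendsto.const_mul
      apply Tendsto.const_mul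
      have hz : ContinuousAt (fun z : ℂ => z ^ n) (ρ0:ℂ) :=
        continuousAt_zpow₀ _ _ (Or.inl hρ0ne)
      exact (hz.tendsto.comp (Complex.continuous_ofReal.tendsto ρ0)).mono_left
        nhdsWithin_le_nhds
    have h2 : Tendsto (fun ρ : ℝ => ∫ θ in (0:ℝ)..(2*Real.pi),
        g ((ρ:ℂ) * Complex.exp (θ * I)) * Complex.exp ((-n : ℤ) * θ * I))
        (nhdsWithin ρ0 (Ioo (1:ℝ) r0)) (nhds (c n * ((2*Real.pi : ℂ) * (ρ0:ℂ)^n))) :=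
      Tendsto.congr' (EventuallyEq.symm heq) h3
    exact tendsto_nhds_unique h1 h2
  -- exp combination identities
  have m1 : ∀ (n : ℤ) (θ : ℝ), Complex.exp (-(θ*I)) * Complex.exp (((-n:ℤ):ℂ)*θ*I)
      = Complex.exp (((-1-n:ℤ):ℂ)*θ*I) := by
    intro n θ; rw [← Complex.exp_add]; congr 1; push_cast; ring
  have m2 : ∀ (n : ℤ) (θ : ℝ), Complex.exp (θ*I) * Complex.exp (((-n:ℤ):ℂ)*θ*I)
      = Complex.exp (((1-n:ℤ):ℂ)*θ*I) := by
    intro n θ; rw [← Complex.exp_add]; congr 1; push_cast; ring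
  have e1 : ∀ θ : ℝ, (starRingEnd ℂ) (Complex.exp ((θ:ℂ)*I)) = Complex.exp (-((θ:ℂ)*I)) := by
    intro θ
    rw [← Complex.exp_conj]
    congr 1
    rw [map_mul, Complex.conj_ofReal, Complex.conj_I]
    ring
  have e2 : ∀ θ : ℝ, (Complex.exp ((θ:ℂ)*I))⁻¹ = Complex.exp (-((θ:ℂ)*I)) := by
    intro θ; rw [Complex.exp_neg]
  have e3 : ∀ θ : ℝ, (Complex.exp (-((θ:ℂ)*I)))⁻¹ = Complex.exp ((θ:ℂ)*I) := by
    intro θ; rw [← Complex.exp_neg, neg_neg]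
  have e4 : ∀ θ : ℝ, (starRingEnd ℂ) (Complex.exp (-((θ:ℂ)*I))) = Complex.exp ((θ:ℂ)*I) := by
    intro θ
    rw [← Complex.exp_conj]
    congr 1
    rw [map_neg, map_mul, Complex.conj_ofReal, Complex.conj_I]
    ring
  -- boundary pointwise identity at r0
  have hptr0 : ∀ (n : ℤ) (θ : ℝ),
      g ((r0:ℂ) * Complex.exp (θ * I)) * Complex.exp ((-n : ℤ) * θ * I)
      = ((f:ℂ) * conj a * r0) * Complex.exp (((-1-n:ℤ):ℂ)*θ*I)
        + ((f:ℂ) * conj b * (r0:ℂ)⁻¹) * Complex.exp (((1-n:ℤ):ℂ)*θ*I) := by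
    intro n θ
    rw [hbdry0 _ (stmt15_abs r0 hr0pos θ)]
    have hcj : (starRingEnd ℂ) (a * ((r0:ℂ) * Complex.exp ((θ:ℂ)*I))
          + b * ((r0:ℂ) * Complex.exp ((θ:ℂ)*I))⁻¹)
        = conj a * (r0:ℂ) * Complex.exp (-((θ:ℂ)*I))
          + conj b * (r0:ℂ)⁻¹ * Complex.exp ((θ:ℂ)*I) := by
      simp only [map_add, map_mul, map_inv₀, Complex.conj_ofReal, e1, e2, e3, e4, mul_inv]
      ring
    rw [hcj, ← m1 n θ, ← m2 n θ]
    ring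
  -- boundary pointwise identity at 1
  have hpt1 : ∀ (n : ℤ) (θ : ℝ),
      g (((1:ℝ):ℂ) * Complex.exp (θ * I)) * Complex.exp ((-n : ℤ) * θ * I)
      = (conj a + (κ:ℂ) * b) * Complex.exp (((-1-n:ℤ):ℂ)*θ*I)
        + (conj b + (κ:ℂ) * a) * Complex.exp (((1-n:ℤ):ℂ)*θ*I) := by
    intro n θ
    rw [hbdry1 _ (stmt15_abs 1 one_pos θ)]
    have hcj : (starRingEnd ℂ) (a * (((1:ℝ):ℂ) * Complex.exp ((θ:ℂ)*I))
          + b * (((1:ℝ):ℂ) * Complex.exp ((θ:ℂ)*I))⁻¹)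
        = conj a * Complex.exp (-((θ:ℂ)*I)) + conj b * Complex.exp ((θ:ℂ)*I) := by
      simp only [map_add, map_mul, map_inv₀, Complex.conj_ofReal, e1, e2, e3, e4, mul_inv]
      push_cast
      ring
    have hlin : a * (((1:ℝ):ℂ) * Complex.exp ((θ:ℂ)*I))
          + b * (((1:ℝ):ℂ) * Complex.exp ((θ:ℂ)*I))⁻¹
        = a * Complex.exp ((θ:ℂ)*I) + b * Complex.exp (-((θ:ℂ)*I)) := by
      rw [mul_inv, e2]
      push_cast
      ring
    rw [hcj, hlin, ← m1 n θ, ← m2 n θ]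
    ring
  -- the two coefficient equations
  have E1 : ∀ n : ℤ, c n * ((2*Real.pi : ℂ) * (r0:ℂ)^n)
      = (if n = -1 then ((f:ℂ) * conj a * r0) * (2*Real.pi : ℂ) else 0)
        + (if n = 1 then ((f:ℂ) * conj b * (r0:ℂ)⁻¹) * (2*Real.pi : ℂ) else 0) := by
    intro n
    rw [← key r0 ⟨le_of_lt hr0, le_refl r0⟩ n]
    rw [intervalIntegral.integral_congr (g := fun θ : ℝ =>
      ((f:ℂ) * conj a * r0) * Complex.exp (((-1-n:ℤ):ℂ)*θ*I)
        + ((f:ℂ) * conj b * (r0:ℂ)⁻¹) * Complex.exp (((1-n:ℤ):ℂ)*θ*I))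
      (fun θ _ => hptr0 n θ)]
    exact stmt15_bdry _ _ n
  have E2 : ∀ n : ℤ, c n * (2*Real.pi : ℂ)
      = (if n = -1 then (conj a + (κ:ℂ) * b) * (2*Real.pi : ℂ) else 0)
        + (if n = 1 then (conj b + (κ:ℂ) * a) * (2*Real.pi : ℂ) else 0) := by
    intro n
    have h := key 1 ⟨le_refl 1, le_of_lt hr0⟩ n
    rw [intervalIntegral.integral_congr (g := fun θ : ℝ =>
      (conj a + (κ:ℂ) * b) * Complex.exp (((-1-n:ℤ):ℂ)*θ*I)
        + (conj b + (κ:ℂ) * a) * Complex.exp (((1-n:ℤ):ℂ)*θ*I))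
      (fun θ _ => hpt1 n θ)] at h
    rw [stmt15_bdry _ _ n] at h
    have h1 : (((1:ℝ):ℂ))^n = 1 := by
      rw [Complex.ofReal_one, one_zpow]
    rw [h1, mul_one] at h
    exact h.symm
  refine ⟨?_, ?_, ?_, ?_, ?_⟩
  · have e := E1 1
    simp only [if_neg (by decide : (1:ℤ) ≠ -1), if_pos rfl, if_true, zero_add, zpow_one] at e
    have h4 : c 1 * ((2*Real.pi : ℂ) * (r0:ℂ))
        = ((f:ℂ) * conj b * ((r0:ℂ) ^ (-2:ℤ))) * ((2*Real.pi : ℂ) * (r0:ℂ)) := by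
      rw [e, show ((r0:ℂ)) ^ (-2:ℤ) = ((r0:ℂ)*(r0:ℂ))⁻¹ by
        rw [zpow_neg, zpow_two]]
      field_simp
    exact mul_right_cancel₀ (mul_ne_zero h2πne hr0ne) h4
  · have e := E2 1
    simp only [if_neg (by decide : (1:ℤ) ≠ -1), if_pos rfl, zero_add] at e
    exact mul_right_cancel₀ h2πne e
  · have e := E1 (-1)
    simp only [if_pos rfl, if_true, if_neg (by decide : (-1:ℤ) ≠ 1), add_zero] at e
    rw [zpow_neg_one] at e
    have h4 : c (-1) * ((2*Real.pi : ℂ) * (r0:ℂ)⁻¹)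
        = ((f:ℂ) * conj a * ((r0:ℂ) ^ (2:ℤ))) * ((2*Real.pi : ℂ) * (r0:ℂ)⁻¹) := by
      rw [e, show ((r0:ℂ)) ^ (2:ℤ) = (r0:ℂ)*(r0:ℂ) from zpow_two _]
      field_simp
    exact mul_right_cancel₀ (mul_ne_zero h2πne (inv_ne_zero hr0ne)) h4
  · have e := E2 (-1)
    simp only [if_pos rfl, if_neg (by decide : (-1:ℤ) ≠ 1), add_zero] at e
    exact mul_right_cancel₀ h2πne e
  · intro n hn1 hn2
    have e := E2 n
    simp only [if_neg hn2, if_neg hn1, add_zero, zero_add] at e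
    exact (mul_eq_zero.mp e).resolve_right h2πne
end Main
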